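/- arXiv:math-ph/0605006 — 4 statements merged into one kernel-verified Lean document; each statement's English description precedes it below -/
import Mathlib

section
/- Let N ≥ 1, let ψ : ℂ → ℝ, and let P = {P₁,…,P_N} be any complete set of monic polynomials. Then, assuming absolute integrability, ∫_{ℂ^N} |Δ(γ)|² · ∏_{n=1}^N ψ(γ_n) e^{−|γ_n|²/2} dλ_{2N}(γ) = N! · det W_P, where W_P is the N×N matrix with entries W_P[j,k] = ⟨P_j | P_k⟩. -/
open MeasureTheory Finset

noncomputable section

/-- The Vandermonde product `Δ(γ) = ∏_{m<n} (γ_n - γ_m)`. -/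
def vand {K : ℕ} (γ : Fin K → ℂ) : ℂ := ∏ m : Fin K, ∏ n ∈ Finset.Ioi m, (γ n - γ m)

/-- The inner product `⟨P|Q⟩ = ∫_ℂ e^{−|γ|²/2} ψ(γ) conj(P(γ)) Q(γ) dλ₂(γ)`. -/
def innerGin (ψ : ℂ → ℝ) (P Q : Polynomial ℂ) : ℂ :=
  ∫ γ : ℂ, ((Real.exp (-(‖γ‖)^2/2) : ℝ) : ℂ) * ((ψ γ : ℝ) : ℂ) *
    (starRingEnd ℂ) (P.eval γ) * Q.eval γ

/-- The GinUE eigenvalue integrand `|Δ(γ)|² ∏_n ψ(γ_n) e^{−|γ_n|²/2}` on `ℂ^N`. -/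
def ginueIntegrand (ψ : ℂ → ℝ) {N : ℕ} (γ : Fin N → ℂ) : ℂ :=
  ((‖vand γ‖ : ℝ) : ℂ)^2 *
    ∏ n : Fin N, ((ψ (γ n) : ℝ) : ℂ) * ((Real.exp (-(‖γ n‖)^2/2) : ℝ) : ℂ)

end

noncomputable section

open Equiv

/-- **Theorem 2 (Sinclair).**  For any complete set of monic polynomials `P`
(`P n` monic of degree `n`), the unnormalized GinUE ensemble average
`∫_{ℂ^N} |Δ(γ)|² ∏_n ψ(γ_n)e^{−|γ_n|²/2} dλ_{2N}(γ)` equals `N! · det W_P`,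
where `W_P[j,k] = ⟨P_j|P_k⟩`, assuming absolute integrability. -/
theorem ginue_average_eq_det (N : ℕ) (hN : 1 ≤ N) (ψ : ℂ → ℝ)
    (P : ℕ → Polynomial ℂ)
    (hP : ∀ n < N, (P n).Monic ∧ (P n).natDegree = n)
    (hInt : Integrable (fun γ : Fin N → ℂ => ginueIntegrand ψ γ))
    (hIntW : ∀ p < N, ∀ q < N, Integrable (fun γ : ℂ =>
      ((Real.exp (-(‖γ‖)^2/2) : ℝ) : ℂ) * ((ψ γ : ℝ) : ℂ) *
        (starRingEnd ℂ) ((P p).eval γ) * (P q).eval γ)) :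
    (∫ γ : Fin N → ℂ, ginueIntegrand ψ γ)
      = (Nat.factorial N : ℂ) *
        Matrix.det (Matrix.of fun j k : Fin N => innerGin ψ (P (j:ℕ)) (P (k:ℕ))) := by
  classical
  -- notation
  set f : Fin N → Fin N → ℂ → ℂ := fun p q z =>
    ((Real.exp (-(‖z‖)^2/2) : ℝ) : ℂ) * ((ψ z : ℝ) : ℂ) *
      (starRingEnd ℂ) ((P (p:ℕ)).eval z) * (P (q:ℕ)).eval z with hf
  set ε : Equiv.Perm (Fin N) → ℂ := fun σ => ((Equiv.Perm.sign σ : ℤ) : ℂ) with hε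
  have hεinv : ∀ σ : Equiv.Perm (Fin N), ε σ⁻¹ = ε σ := by
    intro σ; simp [hε]
  have hεsq : ∀ σ : Equiv.Perm (Fin N), ε σ * ε σ = 1 := by
    intro σ
    simp only [hε]
    rw [← Int.cast_mul, ← Units.val_mul, ← sq, Int.units_sq]
    simp
  set W : Matrix (Fin N) (Fin N) ℂ :=
    Matrix.of fun j k : Fin N => innerGin ψ (P (j:ℕ)) (P (k:ℕ)) with hW
  have hWf : ∀ p q : Fin N, W p q = ∫ z : ℂ, f p q z := by
    intro p q; rfl
  -- pointwise expansion of the integrand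
  have key : ∀ γ : Fin N → ℂ, ginueIntegrand ψ γ =
      ∑ σ : Equiv.Perm (Fin N), ∑ τ : Equiv.Perm (Fin N),
        (ε σ * ε τ) * ∏ j : Fin N, f (τ⁻¹ j) (σ⁻¹ j) (γ j) := by
    intro γ
    have hdeg : ∀ i : Fin N, (P (i:ℕ)).natDegree = (i:ℕ) := fun i => (hP i i.2).2
    have hmon : ∀ i : Fin N, (P (i:ℕ)).Monic := fun i => (hP i i.2).1
    have hvand : vand γ = (Matrix.of fun i j : Fin N => (P (j:ℕ)).eval (γ i)).det := by
      rw [← Matrix.det_eval_matrixOfPolynomials_eq_det_vandermonde γ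
        (fun j : Fin N => P (j:ℕ)) hdeg hmon, Matrix.det_vandermonde]
      rfl
    set D : ℂ := (Matrix.of fun i j : Fin N => (P (j:ℕ)).eval (γ i)).det with hD
    have habs : ((‖vand γ‖ : ℝ) : ℂ)^2 = (starRingEnd ℂ) D * D := by
      rw [hvand] at *
      rw [← Complex.normSq_eq_conj_mul_self]
      norm_cast
      exact Complex.sq_norm _
    have hDexp : D = ∑ σ : Equiv.Perm (Fin N), ε σ * ∏ i : Fin N,
        (P ((σ⁻¹ i : Fin N) : ℕ)).eval (γ i) := by
      rw [hD, Matrix.det_apply']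
      refine Finset.sum_congr rfl fun σ _ => ?_
      congr 1
      rw [← Equiv.prod_comp σ (fun i => (P ((σ⁻¹ i : Fin N) : ℕ)).eval (γ i))]
      refine Finset.prod_congr rfl fun i _ => ?_
      simp
    have hDconj : (starRingEnd ℂ) D = ∑ τ : Equiv.Perm (Fin N), ε τ * ∏ i : Fin N,
        (starRingEnd ℂ) ((P ((τ⁻¹ i : Fin N) : ℕ)).eval (γ i)) := by
      rw [hDexp, map_sum]
      refine Finset.sum_congr rfl fun τ _ => ?_
      rw [map_mul, map_prod]
      congr 1
      simp [hε]
    rw [ginueIntegrand, habs, mul_comm ((starRingEnd ℂ) D) D, hDconj, hDexp,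
      Finset.sum_mul_sum, Finset.sum_mul]
    refine Finset.sum_congr rfl fun σ _ => ?_
    rw [Finset.sum_mul]
    refine Finset.sum_congr rfl fun τ _ => ?_
    rw [mul_mul_mul_comm, mul_assoc, ← Finset.prod_mul_distrib, ← Finset.prod_mul_distrib]
    congr 1
    refine Finset.prod_congr rfl fun j _ => ?_
    simp only [hf]
    ring
  -- integrate term by term
  have hint_term : ∀ σ τ : Equiv.Perm (Fin N),
      Integrable (fun γ : Fin N → ℂ =>
        (ε σ * ε τ) * ∏ j : Fin N, f (τ⁻¹ j) (σ⁻¹ j) (γ j)) := by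
    intro σ τ
    refine Integrable.const_mul ?_ _
    exact Integrable.fintype_prod (fun j => hIntW ((τ⁻¹ j : Fin N) : ℕ) (τ⁻¹ j).2
      ((σ⁻¹ j : Fin N) : ℕ) (σ⁻¹ j).2)
  calc (∫ γ : Fin N → ℂ, ginueIntegrand ψ γ)
      = ∫ γ : Fin N → ℂ, ∑ σ : Equiv.Perm (Fin N), ∑ τ : Equiv.Perm (Fin N),
          (ε σ * ε τ) * ∏ j : Fin N, f (τ⁻¹ j) (σ⁻¹ j) (γ j) := by
        exact integral_congr_ae (Filter.Eventually.of_forall fun γ => key γ)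
    _ = ∑ σ : Equiv.Perm (Fin N), ∑ τ : Equiv.Perm (Fin N),
          (ε σ * ε τ) * ∏ j : Fin N, W (τ⁻¹ j) (σ⁻¹ j) := by
        rw [integral_finset_sum _ (fun σ _ => integrable_finset_sum _
          (fun τ _ => hint_term σ τ))]
        refine Finset.sum_congr rfl fun σ _ => ?_
        rw [integral_finset_sum _ (fun τ _ => hint_term σ τ)]
        refine Finset.sum_congr rfl fun τ _ => ?_
        rw [integral_const_mul, MeasureTheory.volume_pi, MeasureTheory.integral_fintype_prod_eq_prod
          (ι := Fin N) (fun j z => f (τ⁻¹ j) (σ⁻¹ j) z)]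
        congr 1
    _ = ∑ σ : Equiv.Perm (Fin N), ∑ τ : Equiv.Perm (Fin N),
          (ε σ * ε τ) * ∏ j : Fin N, W (τ j) (σ j) := by
        rw [← Equiv.sum_comp (Equiv.inv (Equiv.Perm (Fin N)))]
        refine Finset.sum_congr rfl fun σ _ => ?_
        rw [← Equiv.sum_comp (Equiv.inv (Equiv.Perm (Fin N)))]
        refine Finset.sum_congr rfl fun τ _ => ?_
        simp [hεinv]
    _ = ∑ τ : Equiv.Perm (Fin N), ε τ * ∑ σ : Equiv.Perm (Fin N),
          ε σ * ∏ j : Fin N, W (τ j) (σ j) := by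
        rw [Finset.sum_comm]
        refine Finset.sum_congr rfl fun τ _ => ?_
        rw [Finset.mul_sum]
        refine Finset.sum_congr rfl fun σ _ => ?_
        ring
    _ = ∑ τ : Equiv.Perm (Fin N), ε τ * (ε τ * W.det) := by
        refine Finset.sum_congr rfl fun τ _ => ?_
        congr 1
        have h1 : (∑ σ : Equiv.Perm (Fin N), ε σ * ∏ j : Fin N, W (τ j) (σ j))
            = (Matrix.of fun a b : Fin N => W (τ b) a).det := by
          rw [Matrix.det_apply']
          exact Finset.sum_congr rfl fun σ _ => rfl
        have h2 : Matrix.transpose (Matrix.of fun a b : Fin N => W (τ b) a)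
            = W.submatrix τ id := by
          ext a b; rfl
        rw [h1, ← Matrix.det_transpose, h2, Matrix.det_permute]
    _ = (Nat.factorial N : ℂ) * W.det := by
        have : ∀ τ : Equiv.Perm (Fin N), ε τ * (ε τ * W.det) = W.det := by
          intro τ; rw [← mul_assoc, hεsq, one_mul]
        rw [Finset.sum_congr rfl (fun τ _ => this τ), Finset.sum_const, Finset.card_univ,
          Fintype.card_perm]
        simp
end
end

section
/- Let N ≥ 1, let ψ : ℂ → ℝ, and let Q = {Q₁,…,Q_N} be a complete set of monic polynomials that is orthogonal with respect to ⟨·|·⟩, i.e. ⟨Q_j | Q_k⟩ = 0 whenever j ≠ k. Then, assuming absolute integrability, ∫_{ℂ^N} |Δ(γ)|² · ∏_{n=1}^N ψ(γ_n) e^{−|γ_n|²/2} dλ_{2N}(γ) = N! · ∏_{n=1}^N ⟨Q_n | Q_n⟩. -/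
open MeasureTheory Finset

noncomputable section

/-- **Corollary (Sinclair, GinUE).**  If `Q` is the complete family of monic
polynomials orthogonal with respect to `⟨·|·⟩`, then the unnormalized GinUE ensemble
average `∫_{ℂ^N} |Δ(γ)|² ∏_n ψ(γ_n)e^{−|γ_n|²/2} dλ_{2N}(γ)` equals
`N! ∏_{n=1}^N ⟨Q_n|Q_n⟩`, assuming absolute integrability. -/
theorem ginue_average_eq_prod (N : ℕ) (hN : 1 ≤ N) (ψ : ℂ → ℝ)
    (Q : ℕ → Polynomial ℂ)
    (hQ : ∀ n < N, (Q n).Monic ∧ (Q n).natDegree = n)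
    (horth : ∀ j < N, ∀ k < N, j ≠ k → innerGin ψ (Q j) (Q k) = 0)
    (hInt : Integrable (fun γ : Fin N → ℂ => ginueIntegrand ψ γ))
    (hIntW : ∀ p < N, ∀ q < N, Integrable (fun γ : ℂ =>
      ((Real.exp (-(‖γ‖)^2/2) : ℝ) : ℂ) * ((ψ γ : ℝ) : ℂ) *
        (starRingEnd ℂ) ((Q p).eval γ) * (Q q).eval γ)) :
    (∫ γ : Fin N → ℂ, ginueIntegrand ψ γ)
      = (Nat.factorial N : ℂ) * ∏ n ∈ Finset.range N, innerGin ψ (Q n) (Q n) := by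
  classical
  set g : ℕ → ℕ → ℂ → ℂ := fun p q z =>
    ((Real.exp (-(‖z‖)^2/2) : ℝ) : ℂ) * ((ψ z : ℝ) : ℂ) *
      (starRingEnd ℂ) ((Q p).eval z) * (Q q).eval z with hg
  have hginner : ∀ p q : ℕ, innerGin ψ (Q p) (Q q) = ∫ z : ℂ, g p q z := fun p q => rfl
  -- expansion of the integrand
  have hdet' : ∀ M : Matrix (Fin N) (Fin N) ℂ,
      M.det = ∑ σ : Equiv.Perm (Fin N), ((Equiv.Perm.sign σ : ℤ) : ℂ) * ∏ i, M i (σ i) := by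
    intro M
    rw [← Matrix.det_transpose, Matrix.det_apply']
    rfl
  have expand : ∀ γ : Fin N → ℂ, ginueIntegrand ψ γ =
      ∑ st : Equiv.Perm (Fin N) × Equiv.Perm (Fin N),
        (((Equiv.Perm.sign st.1 : ℤ) : ℂ) * ((Equiv.Perm.sign st.2 : ℤ) : ℂ)) *
          ∏ i, g (st.1 i) (st.2 i) (γ i) := by
    intro γ
    have hvand : vand γ = (Matrix.of fun i j : Fin N => (Q (j : ℕ)).eval (γ i)).det := by
      have := Matrix.det_eval_matrixOfPolynomials_eq_det_vandermonde γ
        (fun j : Fin N => Q (j : ℕ)) (fun j => (hQ j j.isLt).2) (fun j => (hQ j j.isLt).1)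
      rw [Matrix.det_vandermonde] at this
      rw [← this]; rfl
    have habs : ((‖vand γ‖ : ℝ) : ℂ)^2
        = (starRingEnd ℂ) (vand γ) * vand γ := by
      rw [← Complex.ofReal_pow, Complex.sq_norm, Complex.normSq_eq_conj_mul_self]
    rw [ginueIntegrand, habs, hvand]
    rw [show (starRingEnd ℂ) (Matrix.of fun i j : Fin N => (Q (j : ℕ)).eval (γ i)).det
        = ((Matrix.of fun i j : Fin N => (Q (j : ℕ)).eval (γ i)).map (starRingEnd ℂ)).det
      from RingHom.map_det _ _]
    rw [hdet' (((Matrix.of fun i j : Fin N => (Q (j : ℕ)).eval (γ i))).map (starRingEnd ℂ)),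
      hdet' (Matrix.of fun i j : Fin N => (Q (j : ℕ)).eval (γ i))]
    rw [Finset.sum_mul_sum, ← Fintype.sum_prod_type']
    rw [Finset.sum_mul]
    refine Finset.sum_congr rfl fun st _ => ?_
    simp only [Matrix.map_apply, Matrix.of_apply, hg]
    rw [Finset.prod_mul_distrib, Finset.prod_mul_distrib, Finset.prod_mul_distrib,
      Finset.prod_mul_distrib]
    ring
  -- integrate term by term
  have hterm : ∀ st : Equiv.Perm (Fin N) × Equiv.Perm (Fin N),
      Integrable (fun γ : Fin N → ℂ =>
        (((Equiv.Perm.sign st.1 : ℤ) : ℂ) * ((Equiv.Perm.sign st.2 : ℤ) : ℂ)) *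
          ∏ i, g (st.1 i) (st.2 i) (γ i)) := by
    intro st
    exact (Integrable.fintype_prod (f := fun i : Fin N => g (st.1 i) (st.2 i))
      (fun i => hIntW _ (st.1 i).isLt _ (st.2 i).isLt)).const_mul _
  have step1 : (∫ γ : Fin N → ℂ, ginueIntegrand ψ γ)
      = ∑ st : Equiv.Perm (Fin N) × Equiv.Perm (Fin N),
        (((Equiv.Perm.sign st.1 : ℤ) : ℂ) * ((Equiv.Perm.sign st.2 : ℤ) : ℂ)) *
          ∏ i, innerGin ψ (Q (st.1 i)) (Q (st.2 i)) := by
    rw [show (fun γ : Fin N → ℂ => ginueIntegrand ψ γ)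
        = fun γ => ∑ st : Equiv.Perm (Fin N) × Equiv.Perm (Fin N),
            (((Equiv.Perm.sign st.1 : ℤ) : ℂ) * ((Equiv.Perm.sign st.2 : ℤ) : ℂ)) *
              ∏ i, g (st.1 i) (st.2 i) (γ i) from funext expand]
    rw [integral_finset_sum _ (fun st _ => hterm st)]
    refine Finset.sum_congr rfl fun st _ => ?_
    rw [integral_const_mul, MeasureTheory.integral_fintype_prod_volume_eq_prod
      (ι := Fin N) (f := fun i z => g (st.1 i) (st.2 i) z)]
    simp only [hginner]
  rw [step1]
  -- off-diagonal terms vanish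
  have hoff : ∀ st : Equiv.Perm (Fin N) × Equiv.Perm (Fin N), st.1 ≠ st.2 →
      (((Equiv.Perm.sign st.1 : ℤ) : ℂ) * ((Equiv.Perm.sign st.2 : ℤ) : ℂ)) *
        ∏ i, innerGin ψ (Q (st.1 i)) (Q (st.2 i)) = 0 := by
    intro st hne
    obtain ⟨i, hi⟩ : ∃ i, st.1 i ≠ st.2 i := by
      by_contra h
      push_neg at h
      exact hne (Equiv.ext h)
    rw [Finset.prod_eq_zero (Finset.mem_univ i)
      (horth _ (st.1 i).isLt _ (st.2 i).isLt (fun h => hi (Fin.val_injective h))), mul_zero]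
  rw [Fintype.sum_prod_type]
  have hdiag : ∀ σ : Equiv.Perm (Fin N),
      (∑ τ : Equiv.Perm (Fin N),
        (((Equiv.Perm.sign σ : ℤ) : ℂ) * ((Equiv.Perm.sign τ : ℤ) : ℂ)) *
          ∏ i, innerGin ψ (Q (σ i)) (Q (τ i)))
      = ∏ n ∈ Finset.range N, innerGin ψ (Q n) (Q n) := by
    intro σ
    rw [Finset.sum_eq_single σ (fun τ _ hτ => hoff (σ, τ) (Ne.symm hτ))
      (fun h => absurd (Finset.mem_univ σ) h)]
    have hsgn : ((Equiv.Perm.sign σ : ℤ) : ℂ) * ((Equiv.Perm.sign σ : ℤ) : ℂ) = 1 := by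
      rw [← Int.cast_mul, ← Units.val_mul, ← sq, Int.units_sq, Units.val_one, Int.cast_one]
    rw [hsgn, one_mul]
    rw [show (∏ i, innerGin ψ (Q (σ i)) (Q (σ i)))
        = ∏ i : Fin N, innerGin ψ (Q i) (Q i) from
      Equiv.prod_comp σ (fun i => innerGin ψ (Q (i : ℕ)) (Q (i : ℕ)))]
    exact Fin.prod_univ_eq_prod_range (fun n => innerGin ψ (Q n) (Q n)) N
  rw [Finset.sum_congr rfl (fun σ _ => hdiag σ), Finset.sum_const, Finset.card_univ,
    Fintype.card_perm, Fintype.card_fin, nsmul_eq_mul]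

end
end

section
/- Let L+2M = N, let α ∈ ℝ^L, β ∈ (ℂ∖ℝ)^M, set γ = (β̄₁,β₁,…,β̄_M,β_M,α₁,…,α_L), and let P = {P₁,…,P_N} be a complete set of monic polynomials. Let W^{α,β} be the N×N matrix with entries W^{α,β}[j,k] := P_k(γ_j). Then |Δ(α,β)| = Σ_{t∈I_{2M}^N} sgn(t) · { det W^β_{i,t} · (−i)^M ∏_{m=1}^M sgn(Im β_m) } · { det W^α_{i',t'} · ∏_{j<k} sgn(α_k − α_j) }, where i ∈ I_{2M}^N is the identity map, the minor W^β_{i,t} (taken from the first 2M rows) depends only on β, and the minor W^α_{i',t'} (taken from the last L rows) depends only on α. -/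
open Finset

noncomputable section

/-- The permutation `ι_t` of `{0,…,N-1}` induced by an increasing function
`t : Fin K → Fin N` (encoded by its image, the `K`-element set `s`): it equals `t` on the
first `K` indices, and the increasing enumeration `t'` of the complement on the rest. -/
def shuffle {N K : ℕ} (s : Finset (Fin N)) (hs : s.card = K) : Equiv.Perm (Fin N) :=
  Equiv.ofBijective
    (fun n => if h : (n:ℕ) < K then s.orderEmbOfFin hs ⟨(n:ℕ), h⟩
      else sᶜ.orderEmbOfFin (by rw [Finset.card_compl, Fintype.card_fin, hs])
        ⟨(n:ℕ) - K, by have := n.isLt; omega⟩)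
    (by
      refine Finite.injective_iff_bijective.mp ?_
      intro a b hab
      by_cases ha : (a:ℕ) < K <;> by_cases hb : (b:ℕ) < K
      · simp only [dif_pos ha, dif_pos hb] at hab
        have := (s.orderEmbOfFin hs).injective hab
        have hv : (a:ℕ) = (b:ℕ) := by simpa using this
        exact Fin.ext hv
      · simp only [dif_pos ha, dif_neg hb] at hab
        have h1 : s.orderEmbOfFin hs ⟨(a:ℕ), ha⟩ ∈ s := Finset.orderEmbOfFin_mem s hs _
        have h2 := Finset.orderEmbOfFin_mem sᶜ
          (by rw [Finset.card_compl, Fintype.card_fin, hs])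
          ⟨(b:ℕ) - K, by have := b.isLt; omega⟩
        rw [hab] at h1
        exact absurd h1 (Finset.mem_compl.mp h2)
      · simp only [dif_neg ha, dif_pos hb] at hab
        have h1 : s.orderEmbOfFin hs ⟨(b:ℕ), hb⟩ ∈ s := Finset.orderEmbOfFin_mem s hs _
        have h2 := Finset.orderEmbOfFin_mem sᶜ
          (by rw [Finset.card_compl, Fintype.card_fin, hs])
          ⟨(a:ℕ) - K, by have := a.isLt; omega⟩
        rw [← hab] at h1
        exact absurd h1 (Finset.mem_compl.mp h2)
      · simp only [dif_neg ha, dif_neg hb] at hab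
        have := (sᶜ.orderEmbOfFin
          (by rw [Finset.card_compl, Fintype.card_fin, hs])).injective hab
        have hv : (a:ℕ) - K = (b:ℕ) - K := by simpa using this
        exact Fin.ext (by omega))

end

open MeasureTheory Finset

noncomputable section

/-- The vector `γ = (β̄₁, β₁, …, β̄_M, β_M, α₁, …, α_L)`. -/
def gammaVec {L M : ℕ} (α : Fin L → ℝ) (β : Fin M → ℂ) : Fin (2*M + L) → ℂ :=
  fun j => if h : (j:ℕ) < 2*M then
      (if (j:ℕ) % 2 = 0 then (starRingEnd ℂ) (β ⟨(j:ℕ)/2, by omega⟩) else β ⟨(j:ℕ)/2, by omega⟩)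
    else ((α ⟨(j:ℕ) - 2*M, by have := j.isLt; omega⟩ : ℝ) : ℂ)


noncomputable section AuxLaplace
open Equiv

variable {R : Type*} [CommRing R]

lemma shuffle_apply {N K : ℕ} (s : Finset (Fin N)) (hs : s.card = K) (n : Fin N) :
    shuffle s hs n = if h : (n:ℕ) < K then s.orderEmbOfFin hs ⟨(n:ℕ), h⟩
      else sᶜ.orderEmbOfFin (by rw [Finset.card_compl, Fintype.card_fin, hs])
        ⟨(n:ℕ) - K, by have := n.isLt; omega⟩ := rfl

lemma det_eq_sum_perm {n : ℕ} (M : Matrix (Fin n) (Fin n) R) :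
    M.det = ∑ σ : Perm (Fin n), ((Perm.sign σ : ℤ) : R) * ∏ i, M i (σ i) := by
  rw [← Matrix.det_transpose, Matrix.det_apply']
  rfl

lemma det_laplace {K L N : ℕ} (h : K + L = N) (A : Matrix (Fin N) (Fin N) R) :
    A.det = ∑ s ∈ (Finset.powersetCard K (Finset.univ : Finset (Fin N))).attach,
      ((Perm.sign (shuffle s.1 ((Finset.mem_powersetCard.mp s.2).2)) : ℤ) : R) *
      ((Matrix.of fun j k : Fin K =>
          A ⟨(j:ℕ), by have := j.isLt; omega⟩
            (s.1.orderEmbOfFin ((Finset.mem_powersetCard.mp s.2).2) k)).det *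
       (Matrix.of fun j k : Fin L =>
          A ⟨K + (j:ℕ), by have := j.isLt; omega⟩
            ((s.1)ᶜ.orderEmbOfFin (by rw [Finset.card_compl, Fintype.card_fin,
                (Finset.mem_powersetCard.mp s.2).2]; omega) k)).det) := by
  classical
  subst h
  set e := (finSumFinEquiv : Fin K ⊕ Fin L ≃ Fin (K + L)) with he
  have hcard : ∀ s : {s : Finset (Fin (K + L)) // s ∈ Finset.powersetCard K Finset.univ},
      s.1.card = K := fun s => (Finset.mem_powersetCard.mp s.2).2
  have hccard : ∀ s : {s : Finset (Fin (K + L)) // s ∈ Finset.powersetCard K Finset.univ},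
      (s.1)ᶜ.card = L := fun s => by
    rw [Finset.card_compl, Fintype.card_fin, hcard]; omega
  let S := {s : Finset (Fin (K + L)) // s ∈ Finset.powersetCard K Finset.univ}
  let emb : S → Fin K → Fin (K+L) := fun s => s.1.orderEmbOfFin (hcard s)
  let embc : S → Fin L → Fin (K+L) := fun s => (s.1)ᶜ.orderEmbOfFin (hccard s)
  let T := S × Perm (Fin K) × Perm (Fin L)
  let bl : T → Perm (Fin (K+L)) := fun t => Equiv.permCongr e (Equiv.sumCongr t.2.1 t.2.2)
  let g : T → Perm (Fin (K+L)) := fun t => shuffle t.1.1 (hcard t.1) * bl t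
  have hbl_l : ∀ (t : T) (j : Fin K), bl t (e (Sum.inl j)) = e (Sum.inl (t.2.1 j)) := by
    intro t j; simp [bl, Equiv.permCongr_apply]
  have hbl_r : ∀ (t : T) (j : Fin L), bl t (e (Sum.inr j)) = e (Sum.inr (t.2.2 j)) := by
    intro t j; simp [bl, Equiv.permCongr_apply]
  have he_l : ∀ j : Fin K, (e (Sum.inl j) : ℕ) = (j : ℕ) := by
    intro j; simp [he]
  have he_r : ∀ j : Fin L, (e (Sum.inr j) : ℕ) = K + (j : ℕ) := by
    intro j; simp [he]
  have hg_l : ∀ (t : T) (j : Fin K), g t (e (Sum.inl j)) = emb t.1 (t.2.1 j) := by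
    intro t j
    show shuffle _ _ (bl t (e (Sum.inl j))) = _
    rw [hbl_l, shuffle_apply]
    rw [dif_pos (show ((e (Sum.inl (t.2.1 j)) : ℕ)) < K by rw [he_l]; exact (t.2.1 j).isLt)]
    exact congrArg (emb t.1) (Fin.ext (he_l _))
  have hg_r : ∀ (t : T) (j : Fin L), g t (e (Sum.inr j)) = embc t.1 (t.2.2 j) := by
    intro t j
    show shuffle _ _ (bl t (e (Sum.inr j))) = _
    rw [hbl_r, shuffle_apply]
    rw [dif_neg (show ¬ ((e (Sum.inr (t.2.2 j)) : ℕ)) < K by rw [he_r]; omega)]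
    have hlt : ((e (Sum.inr (t.2.2 j)) : ℕ)) - K < L := by
      have h1 := he_r (t.2.2 j)
      have h2 := (t.2.2 j).isLt
      omega
    have hidx : (⟨(e (Sum.inr (t.2.2 j)) : ℕ) - K, hlt⟩ : Fin L) = t.2.2 j := by
      refine Fin.ext ?_
      show ((e (Sum.inr (t.2.2 j)) : ℕ)) - K = (t.2.2 j : ℕ)
      rw [he_r]; omega
    exact congrArg (embc t.1) hidx
  have hchar : ∀ (t : T) (x : Fin (K+L)), x ∈ t.1.1 ↔ ∃ j : Fin K, g t (e (Sum.inl j)) = x := by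
    intro t x
    constructor
    · intro hx
      have : x ∈ Set.range (emb t.1) := by
        rw [Finset.range_orderEmbOfFin]; exact hx
      obtain ⟨k, hk⟩ := this
      exact ⟨t.2.1.symm k, by rw [hg_l]; simp [hk]⟩
    · rintro ⟨j, rfl⟩
      rw [hg_l]
      exact Finset.orderEmbOfFin_mem _ _ _
  have hinj : Function.Injective g := by
    rintro ⟨⟨s, hsm⟩, π, ρ⟩ ⟨⟨s', hsm'⟩, π', ρ'⟩ hgg
    have hss : s = s' := by
      ext x
      rw [show x ∈ s ↔ _ from hchar ⟨⟨s, hsm⟩, π, ρ⟩ x,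
        show x ∈ s' ↔ _ from hchar ⟨⟨s', hsm'⟩, π', ρ'⟩ x]
      simp only [hgg]
    subst hss
    have hbl' : bl (⟨⟨s, hsm⟩, π, ρ⟩ : T) = bl ⟨⟨s, hsm'⟩, π', ρ'⟩ :=
      mul_left_cancel hgg
    have hππ : π = π' := by
      ext j
      have := congrArg (fun f => f (e (Sum.inl j))) hbl'
      simp only [hbl_l] at this
      have := e.injective this
      exact congrArg Fin.val (Sum.inl.inj this)
    have hρρ : ρ = ρ' := by
      ext j
      have := congrArg (fun f => f (e (Sum.inr j))) hbl'
      simp only [hbl_r] at this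
      have := e.injective this
      exact congrArg Fin.val (Sum.inr.inj this)
    subst hππ; subst hρρ
    rfl
  have hbij : Function.Bijective g := by
    refine (Fintype.bijective_iff_injective_and_card g).mpr ⟨hinj, ?_⟩
    simp only [T, S, Fintype.card_prod, Fintype.card_perm, Fintype.card_coe,
      Finset.card_powersetCard, Finset.card_univ, Fintype.card_fin]
    rw [← Nat.choose_mul_factorial_mul_factorial (Nat.le_add_right K L),
      Nat.add_sub_cancel_left]
    ring
  have hF : ∀ t : T,
      ((Perm.sign (shuffle t.1.1 (hcard t.1)) : ℤ) : R) *
        ((((Perm.sign t.2.1 : ℤ) : R) * ∏ j : Fin K,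
            A ⟨(j:ℕ), by have := j.isLt; omega⟩ (emb t.1 (t.2.1 j))) *
         (((Perm.sign t.2.2 : ℤ) : R) * ∏ j : Fin L,
            A ⟨K + (j:ℕ), by have := j.isLt; omega⟩ (embc t.1 (t.2.2 j))))
      = ((Perm.sign (g t) : ℤ) : R) * ∏ i, A i (g t i) := by
    intro t
    have hsign : Perm.sign (g t) = Perm.sign (shuffle t.1.1 (hcard t.1))
        * (Perm.sign t.2.1 * Perm.sign t.2.2) := by
      rw [show g t = shuffle t.1.1 (hcard t.1) * bl t from rfl, Perm.sign_mul]
      congr 1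
      rw [show bl t = Equiv.permCongr e (Equiv.sumCongr t.2.1 t.2.2) from rfl,
        Perm.sign_permCongr, Perm.sign_sumCongr]
    have hprod : (∏ i, A i (g t i)) =
        (∏ j : Fin K, A ⟨(j:ℕ), by have := j.isLt; omega⟩ (emb t.1 (t.2.1 j))) *
        (∏ j : Fin L, A ⟨K + (j:ℕ), by have := j.isLt; omega⟩ (embc t.1 (t.2.2 j))) := by
      rw [← Equiv.prod_comp e (fun i => A i (g t i)), Fintype.prod_sum_type]
      congr 1
      · refine Finset.prod_congr rfl fun j _ => ?_
        rw [hg_l]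
        congr 1
      · refine Finset.prod_congr rfl fun j _ => ?_
        rw [hg_r]
        congr 1
    rw [hsign, hprod]
    push_cast
    ring
  calc A.det = ∑ σ : Perm (Fin (K+L)), ((Perm.sign σ : ℤ) : R) * ∏ i, A i (σ i) :=
        det_eq_sum_perm A
    _ = ∑ t : T,
        ((Perm.sign (shuffle t.1.1 (hcard t.1)) : ℤ) : R) *
        ((((Perm.sign t.2.1 : ℤ) : R) * ∏ j : Fin K,
            A ⟨(j:ℕ), by have := j.isLt; omega⟩ (emb t.1 (t.2.1 j))) *
         (((Perm.sign t.2.2 : ℤ) : R) * ∏ j : Fin L,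
            A ⟨K + (j:ℕ), by have := j.isLt; omega⟩ (embc t.1 (t.2.2 j)))) := by
        refine (Fintype.sum_bijective g hbij _ _ fun t => ?_).symm
        exact hF t
    _ = ∑ s : S, ∑ π : Perm (Fin K), ∑ ρ : Perm (Fin L),
        ((Perm.sign (shuffle s.1 (hcard s)) : ℤ) : R) *
        ((((Perm.sign π : ℤ) : R) * ∏ j : Fin K,
            A ⟨(j:ℕ), by have := j.isLt; omega⟩ (emb s (π j))) *
         (((Perm.sign ρ : ℤ) : R) * ∏ j : Fin L,
            A ⟨K + (j:ℕ), by have := j.isLt; omega⟩ (embc s (ρ j)))) := by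
        rw [Fintype.sum_prod_type]
        exact Finset.sum_congr rfl fun s _ => Fintype.sum_prod_type _
    _ = ∑ s : S,
        ((Perm.sign (shuffle s.1 (hcard s)) : ℤ) : R) *
        ((Matrix.of fun j k : Fin K =>
            A ⟨(j:ℕ), by have := j.isLt; omega⟩
              (s.1.orderEmbOfFin (hcard s) k)).det *
         (Matrix.of fun j k : Fin L =>
            A ⟨K + (j:ℕ), by have := j.isLt; omega⟩
              ((s.1)ᶜ.orderEmbOfFin (hccard s) k)).det) := by
        refine Finset.sum_congr rfl fun s _ => ?_
        symm
        rw [det_eq_sum_perm, det_eq_sum_perm, Finset.sum_mul_sum, Finset.mul_sum]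
        refine Finset.sum_congr rfl fun p _ => ?_
        rw [Finset.mul_sum]
        refine Finset.sum_congr rfl fun q _ => ?_
        simp only [Matrix.of_apply]
        try ring
    _ = _ := Finset.sum_nbij' (fun x => x) (fun x => x)
        (fun a _ => Finset.mem_attach _ _) (fun a _ => Finset.mem_univ _)
        (fun _ _ => rfl) (fun _ _ => rfl) (fun _ _ => rfl)

end AuxLaplace

noncomputable section AuxPhase

def pairs (K : ℕ) : Finset (Fin K × Fin K) := Finset.univ.filter fun p => p.1 < p.2

lemma mem_pairs {K : ℕ} (p : Fin K × Fin K) : p ∈ pairs K ↔ (p.1:ℕ) < (p.2:ℕ) := by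
  unfold pairs
  rw [Finset.mem_filter]
  simp only [Finset.mem_univ, true_and]
  exact Iff.rfl

lemma prod_pairs {G : Type*} [CommMonoid G] {K : ℕ} (f : Fin K → Fin K → G) :
    ∏ p ∈ pairs K, f p.1 p.2 = ∏ m, ∏ n ∈ Finset.Ioi m, f m n := by
  rw [pairs, Finset.prod_filter, ← Finset.univ_product_univ, Finset.prod_product]
  refine Finset.prod_congr rfl fun m _ => ?_
  rw [← Finset.prod_filter]
  congr 1
  ext n
  simp [Finset.mem_Ioi]

section eval
variable {L M : ℕ} (α : Fin L → ℝ) (β : Fin M → ℂ)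

lemma gammaVec_even (a : ℕ) (ha : a < M) (hlt : 2*a < 2*M + L) :
    gammaVec α β ⟨2*a, hlt⟩ = (starRingEnd ℂ) (β ⟨a, ha⟩) := by
  have h2 : (⟨2*a, hlt⟩ : Fin (2*M+L)).val = 2*a := rfl
  simp only [gammaVec, h2]
  rw [dif_pos (show 2*a < 2*M by omega), if_pos (by omega)]
  have hidx : 2*a/2 = a := by omega
  simp only [hidx]

lemma gammaVec_odd (a : ℕ) (ha : a < M) (hlt : 2*a+1 < 2*M + L) :
    gammaVec α β ⟨2*a+1, hlt⟩ = β ⟨a, ha⟩ := by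
  have h2 : (⟨2*a+1, hlt⟩ : Fin (2*M+L)).val = 2*a+1 := rfl
  simp only [gammaVec, h2]
  rw [dif_pos (show 2*a+1 < 2*M by omega), if_neg (by omega)]
  have hidx : (2*a+1)/2 = a := by omega
  simp only [hidx]

lemma gammaVec_alpha (j : ℕ) (hj : j < L) (hlt : 2*M + j < 2*M + L) :
    gammaVec α β ⟨2*M + j, hlt⟩ = ((α ⟨j, hj⟩ : ℝ) : ℂ) := by
  have h2 : (⟨2*M + j, hlt⟩ : Fin (2*M+L)).val = 2*M + j := rfl
  simp only [gammaVec, h2]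
  rw [dif_neg (show ¬ 2*M + j < 2*M by omega)]
  have hidx : 2*M + j - 2*M = j := by omega
  simp only [hidx]

lemma real_mul_sign (x : ℝ) : x * Real.sign x = |x| := by
  rcases lt_trichotomy x 0 with h | h | h
  · rw [Real.sign_of_neg h, abs_of_neg h]; ring
  · simp [h]
  · rw [Real.sign_of_pos h, abs_of_pos h]; ring

end eval

lemma fin_val_mk {n : ℕ} (x : ℕ) (h : x < n) : ((⟨x, h⟩ : Fin n) : ℕ) = x := rfl

lemma abs_vand_eq {L M : ℕ} (α : Fin L → ℝ) (β : Fin M → ℂ) (hβ : ∀ m, (β m).im ≠ 0) :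
    ((‖vand (gammaVec α β)‖ : ℝ) : ℂ)
      = vand (gammaVec α β) * ((-Complex.I)^M * ∏ m : Fin M, ((Real.sign ((β m).im) : ℝ) : ℂ))
        * ∏ j : Fin L, ∏ k ∈ Finset.Ioi j, ((Real.sign (α k - α j) : ℝ) : ℂ) := by
  classical
  have hv : vand (gammaVec α β) = ∏ p ∈ pairs (2*M+L),
      (gammaVec α β p.2 - gammaVec α β p.1) := (prod_pairs _).symm
  set f : Fin (2*M+L) × Fin (2*M+L) → ℂ :=
    fun p => gammaVec α β p.2 - gammaVec α β p.1 with hf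
  set E1 := (pairs (2*M+L)).filter (fun p => (p.2:ℕ) < 2*M ∧ (p.1:ℕ)/2 = (p.2:ℕ)/2) with hE1d
  set E2 := (pairs (2*M+L)).filter (fun p => (p.2:ℕ) < 2*M ∧ ¬ (p.1:ℕ)/2 = (p.2:ℕ)/2) with hE2d
  set E3 := (pairs (2*M+L)).filter (fun p => ¬ (p.2:ℕ) < 2*M ∧ (p.1:ℕ) < 2*M) with hE3d
  set E4 := (pairs (2*M+L)).filter (fun p => ¬ (p.2:ℕ) < 2*M ∧ ¬ (p.1:ℕ) < 2*M) with hE4d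
  have hsplit : vand (gammaVec α β) = (∏ p ∈ E1, f p) * (∏ p ∈ E2, f p)
      * ((∏ p ∈ E3, f p) * (∏ p ∈ E4, f p)) := by
    rw [hv, ← Finset.prod_filter_mul_prod_filter_not (pairs (2*M+L))
      (fun p => (p.2:ℕ) < 2*M) f]
    congr 1
    · rw [← Finset.prod_filter_mul_prod_filter_not ((pairs (2*M+L)).filter
        (fun p => (p.2:ℕ) < 2*M)) (fun p => (p.1:ℕ)/2 = (p.2:ℕ)/2) f,
        Finset.filter_filter, Finset.filter_filter]
    · rw [← Finset.prod_filter_mul_prod_filter_not ((pairs (2*M+L)).filter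
        (fun p => ¬ (p.2:ℕ) < 2*M)) (fun p => (p.1:ℕ) < 2*M) f,
        Finset.filter_filter, Finset.filter_filter]
  -- E1 : conjugate pairs
  have hE1 : (∏ p ∈ E1, f p) = ∏ a : Fin M, (β a - (starRingEnd ℂ) (β a)) := by
    refine (Finset.prod_bij'
      (fun (a : Fin M) (_ : a ∈ Finset.univ) =>
        ((⟨2*(a:ℕ), by have := a.isLt; omega⟩,
          ⟨2*(a:ℕ)+1, by have := a.isLt; omega⟩) : Fin (2*M+L) × Fin (2*M+L)))
      (fun p hp => (⟨(p.1:ℕ)/2, by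
        rw [hE1d, Finset.mem_filter, mem_pairs] at hp; omega⟩ : Fin M))
      ?_ ?_ ?_ ?_ ?_).symm
    · intro a _
      rw [hE1d, Finset.mem_filter, mem_pairs]
      simp only [fin_val_mk]
      have := a.isLt
      omega
    · intro p hp
      exact Finset.mem_univ _
    · intro a _
      apply Fin.ext
      simp only [fin_val_mk]
      omega
    · intro p hp
      rcases p with ⟨p1, p2⟩
      rw [hE1d, Finset.mem_filter, mem_pairs] at hp
      dsimp only at hp ⊢
      simp only [Prod.mk.injEq]
      constructor <;> (apply Fin.ext; simp only [fin_val_mk]; omega)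
    · intro a _
      simp only [hf]
      rw [gammaVec_odd α β (a:ℕ) a.isLt, gammaVec_even α β (a:ℕ) a.isLt]
  -- E2 : cross beta-beta pairs
  have hE2 : (∏ p ∈ E2, f p) = ((∏ q ∈ pairs M,
      (Complex.normSq (β q.2 - β q.1)
        * Complex.normSq (β q.2 - (starRingEnd ℂ) (β q.1))) : ℝ) : ℂ) := by
    have step1 : (∏ p ∈ E2, f p) = ∏ x ∈ (pairs M) ×ˢ (Finset.univ : Finset (Fin 2 × Fin 2)),
        (gammaVec α β ⟨2*(x.1.2:ℕ)+(x.2.2:ℕ), by have := x.1.2.isLt; have := x.2.2.isLt; omega⟩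
          - gammaVec α β ⟨2*(x.1.1:ℕ)+(x.2.1:ℕ), by have := x.1.1.isLt; have := x.2.1.isLt; omega⟩) := by
      refine (Finset.prod_bij'
        (fun x (_ : x ∈ (pairs M) ×ˢ (Finset.univ : Finset (Fin 2 × Fin 2))) =>
          ((⟨2*(x.1.1:ℕ)+(x.2.1:ℕ), by have := x.1.1.isLt; have := x.2.1.isLt; omega⟩,
            ⟨2*(x.1.2:ℕ)+(x.2.2:ℕ), by have := x.1.2.isLt; have := x.2.2.isLt; omega⟩)
            : Fin (2*M+L) × Fin (2*M+L)))
        (fun p hp =>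
          ((⟨(p.1:ℕ)/2, by rw [hE2d, Finset.mem_filter, mem_pairs] at hp; omega⟩,
            ⟨(p.2:ℕ)/2, by rw [hE2d, Finset.mem_filter, mem_pairs] at hp; omega⟩),
           (⟨(p.1:ℕ)%2, by omega⟩, ⟨(p.2:ℕ)%2, by omega⟩)))
        ?_ ?_ ?_ ?_ ?_).symm
      · intro x hx
        rw [Finset.mem_product, mem_pairs] at hx
        rw [hE2d, Finset.mem_filter, mem_pairs]
        simp only [fin_val_mk]
        have := x.2.1.isLt
        have := x.2.2.isLt
        omega
      · intro p hp
        rw [hE2d, Finset.mem_filter, mem_pairs] at hp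
        rw [Finset.mem_product, mem_pairs]
        simp only [fin_val_mk, Finset.mem_univ, and_true]
        omega
      · intro x hx
        rcases x with ⟨⟨x1, x2⟩, u1, u2⟩
        rw [Finset.mem_product, mem_pairs] at hx
        dsimp only at hx ⊢
        have := u1.isLt
        have := u2.isLt
        simp only [Prod.mk.injEq]
        refine ⟨⟨?_, ?_⟩, ?_, ?_⟩ <;> (apply Fin.ext; simp only [fin_val_mk]; omega)
      · intro p hp
        rcases p with ⟨p1, p2⟩
        rw [hE2d, Finset.mem_filter, mem_pairs] at hp
        dsimp only at hp ⊢
        simp only [Prod.mk.injEq]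
        constructor <;> (apply Fin.ext; simp only [fin_val_mk]; omega)
      · intro x hx
        rfl
    rw [step1, Finset.prod_product, Complex.ofReal_prod]
    refine Finset.prod_congr rfl fun q hq => ?_
    rw [Fintype.prod_prod_type]
    simp only [Fin.prod_univ_two, Fin.val_zero, Fin.val_one, add_zero]
    rw [Complex.ofReal_mul, ← Complex.mul_conj, ← Complex.mul_conj]
    simp only [gammaVec_even α β (q.1:ℕ) q.1.isLt, gammaVec_even α β (q.2:ℕ) q.2.isLt,
      gammaVec_odd α β (q.1:ℕ) q.1.isLt, gammaVec_odd α β (q.2:ℕ) q.2.isLt, Fin.eta]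
    simp only [map_sub, Complex.conj_conj]
    ring
  -- E3 : beta-alpha pairs
  have hE3 : (∏ p ∈ E3, f p) = ((∏ a : Fin M,
      Complex.normSq (∏ j : Fin L, (((α j : ℝ) : ℂ) - β a)) : ℝ) : ℂ) := by
    have step1 : (∏ p ∈ E3, f p) = ∏ x : Fin M × Fin 2 × Fin L,
        (gammaVec α β ⟨2*M+(x.2.2:ℕ), by have := x.2.2.isLt; omega⟩
          - gammaVec α β ⟨2*(x.1:ℕ)+(x.2.1:ℕ), by have := x.1.isLt; have := x.2.1.isLt; omega⟩) := by
      refine (Finset.prod_bij'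
        (fun (x : Fin M × Fin 2 × Fin L) (_ : x ∈ Finset.univ) =>
          ((⟨2*(x.1:ℕ)+(x.2.1:ℕ), by have := x.1.isLt; have := x.2.1.isLt; omega⟩,
            ⟨2*M+(x.2.2:ℕ), by have := x.2.2.isLt; omega⟩)
            : Fin (2*M+L) × Fin (2*M+L)))
        (fun p hp =>
          ((⟨(p.1:ℕ)/2, by rw [hE3d, Finset.mem_filter, mem_pairs] at hp; omega⟩ : Fin M),
           (⟨(p.1:ℕ)%2, by omega⟩ : Fin 2),
           (⟨(p.2:ℕ)-2*M, by rw [hE3d, Finset.mem_filter, mem_pairs] at hp; have := p.2.isLt; omega⟩ : Fin L)))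
        ?_ ?_ ?_ ?_ ?_).symm
      · intro x _
        rw [hE3d, Finset.mem_filter, mem_pairs]
        simp only [fin_val_mk]
        have := x.1.isLt
        have := x.2.1.isLt
        have := x.2.2.isLt
        omega
      · intro p hp
        exact Finset.mem_univ _
      · intro x _
        rcases x with ⟨x1, u, j⟩
        dsimp only
        have := u.isLt
        simp only [Prod.mk.injEq]
        refine ⟨?_, ?_, ?_⟩ <;> (apply Fin.ext; simp only [fin_val_mk]; omega)
      · intro p hp
        rcases p with ⟨p1, p2⟩
        rw [hE3d, Finset.mem_filter, mem_pairs] at hp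
        dsimp only at hp ⊢
        have := p2.isLt
        simp only [Prod.mk.injEq]
        constructor <;> (apply Fin.ext; simp only [fin_val_mk]; omega)
      · intro x _
        rfl
    rw [step1, Fintype.prod_prod_type, Complex.ofReal_prod]
    refine Finset.prod_congr rfl fun a _ => ?_
    rw [Fintype.prod_prod_type]
    simp only [Fin.prod_univ_two, Fin.val_zero, Fin.val_one, add_zero]
    rw [← Complex.mul_conj, map_prod]
    simp only [gammaVec_even α β (a:ℕ) a.isLt, gammaVec_odd α β (a:ℕ) a.isLt,
      gammaVec_alpha α β, Fin.is_lt, Fin.eta, map_sub, Complex.conj_ofReal]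
    ring
  -- E4 : alpha-alpha pairs
  have hE4 : (∏ p ∈ E4, f p) = ((∏ q ∈ pairs L, (α q.2 - α q.1) : ℝ) : ℂ) := by
    have step1 : (∏ p ∈ E4, f p) = ∏ q ∈ pairs L,
        (gammaVec α β ⟨2*M+(q.2:ℕ), by have := q.2.isLt; omega⟩
          - gammaVec α β ⟨2*M+(q.1:ℕ), by have := q.1.isLt; omega⟩) := by
      refine (Finset.prod_bij'
        (fun (q : Fin L × Fin L) (_ : q ∈ pairs L) =>
          ((⟨2*M+(q.1:ℕ), by have := q.1.isLt; omega⟩,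
            ⟨2*M+(q.2:ℕ), by have := q.2.isLt; omega⟩) : Fin (2*M+L) × Fin (2*M+L)))
        (fun p hp =>
          ((⟨(p.1:ℕ)-2*M, by rw [hE4d, Finset.mem_filter, mem_pairs] at hp; have := p.1.isLt; omega⟩ : Fin L),
           (⟨(p.2:ℕ)-2*M, by rw [hE4d, Finset.mem_filter, mem_pairs] at hp; have := p.2.isLt; omega⟩ : Fin L)))
        ?_ ?_ ?_ ?_ ?_).symm
      · intro q hq
        rw [mem_pairs] at hq
        rw [hE4d, Finset.mem_filter, mem_pairs]
        simp only [fin_val_mk]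
        omega
      · intro p hp
        rw [hE4d, Finset.mem_filter, mem_pairs] at hp
        rw [mem_pairs]
        simp only [fin_val_mk]
        omega
      · intro q hq
        rcases q with ⟨q1, q2⟩
        dsimp only
        simp only [Prod.mk.injEq]
        constructor <;> (apply Fin.ext; simp only [fin_val_mk]; omega)
      · intro p hp
        rcases p with ⟨p1, p2⟩
        rw [hE4d, Finset.mem_filter, mem_pairs] at hp
        dsimp only at hp ⊢
        have := p1.isLt
        have := p2.isLt
        simp only [Prod.mk.injEq]
        constructor <;> (apply Fin.ext; simp only [fin_val_mk]; omega)
      · intro q _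
        rfl
    rw [step1, Complex.ofReal_prod]
    refine Finset.prod_congr rfl fun q _ => ?_
    simp only [gammaVec_alpha α β, Fin.is_lt, Fin.eta, Complex.ofReal_sub]
  -- assembly
  have hII : Complex.I * -Complex.I = 1 := by
    rw [mul_neg, Complex.I_mul_I, neg_neg]
  have hb1 : (∏ a : Fin M, (β a - (starRingEnd ℂ) (β a)))
      * ((-Complex.I)^M * ∏ m : Fin M, ((Real.sign ((β m).im) : ℝ) : ℂ))
      = ((∏ a : Fin M, |2*(β a).im| : ℝ) : ℂ) := by
    have hIM : (-Complex.I)^M = ∏ _a : Fin M, (-Complex.I) := by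
      rw [Finset.prod_const, Finset.card_univ, Fintype.card_fin]
    rw [hIM, ← Finset.prod_mul_distrib, ← Finset.prod_mul_distrib, Complex.ofReal_prod]
    refine Finset.prod_congr rfl fun a _ => ?_
    have him : |2*(β a).im| = (2*(β a).im) * Real.sign ((β a).im) := by
      rcases (hβ a).lt_or_gt with h | h
      · rw [Real.sign_of_neg h, abs_of_neg (by linarith)]; ring
      · rw [Real.sign_of_pos h, abs_of_pos (by linarith)]; ring
    rw [Complex.sub_conj, him]
    push_cast
    linear_combination (-(2:ℂ) * ((β a).im:ℂ) * ((Real.sign ((β a).im) : ℝ) : ℂ)) * Complex.I_sq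
  have hb4 : ((∏ q ∈ pairs L, |α q.2 - α q.1| : ℝ) : ℂ)
      = ((∏ q ∈ pairs L, (α q.2 - α q.1) : ℝ) : ℂ)
        * ∏ j : Fin L, ∏ k ∈ Finset.Ioi j, ((Real.sign (α k - α j) : ℝ) : ℂ) := by
    rw [show (∏ j : Fin L, ∏ k ∈ Finset.Ioi j, ((Real.sign (α k - α j) : ℝ) : ℂ))
        = ∏ q ∈ pairs L, ((Real.sign (α q.2 - α q.1) : ℝ) : ℂ) from
      (prod_pairs fun m n => ((Real.sign (α n - α m) : ℝ) : ℂ)).symm]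
    rw [Complex.ofReal_prod, Complex.ofReal_prod, ← Finset.prod_mul_distrib]
    refine Finset.prod_congr rfl fun q _ => ?_
    rw [← Complex.ofReal_mul, real_mul_sign]
  have h2nonneg : (0:ℝ) ≤ ∏ q ∈ pairs M,
      (Complex.normSq (β q.2 - β q.1)
        * Complex.normSq (β q.2 - (starRingEnd ℂ) (β q.1))) :=
    Finset.prod_nonneg fun q _ => mul_nonneg (Complex.normSq_nonneg _) (Complex.normSq_nonneg _)
  have h3nonneg : (0:ℝ) ≤ ∏ a : Fin M,
      Complex.normSq (∏ j : Fin L, (((α j : ℝ) : ℂ) - β a)) :=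
    Finset.prod_nonneg fun a _ => Complex.normSq_nonneg _
  rw [hsplit, hE1, hE2, hE3, hE4]
  rw [norm_mul, norm_mul, norm_mul, norm_prod, Complex.norm_real, Complex.norm_real,
    Complex.norm_real, Real.norm_eq_abs, Real.norm_eq_abs, Real.norm_eq_abs,
    abs_of_nonneg h2nonneg, abs_of_nonneg h3nonneg]
  rw [show (∏ a : Fin M, ‖β a - (starRingEnd ℂ) (β a)‖)
      = ∏ a : Fin M, |2*(β a).im| from Finset.prod_congr rfl fun a _ => by
    rw [Complex.sub_conj, norm_mul, Complex.norm_I, Complex.norm_real, Real.norm_eq_abs, mul_one]]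
  rw [Finset.abs_prod]
  rw [Complex.ofReal_mul, Complex.ofReal_mul, Complex.ofReal_mul]
  rw [← hb1, hb4]
  ring

lemma vand_cast {n m : ℕ} (h : n = m) (v : Fin m → ℂ) :
    (∏ i : Fin n, ∏ j ∈ Finset.Ioi i, (v (Fin.cast h j) - v (Fin.cast h i))) = vand v := by subst h; rfl

end AuxPhase

/-- **Lemma 1 (Sinclair).**  Laplace expansion of `|Δ(α,β)|`: with
`W^{α,β}[j,k] = P_k(γ_j)`, summing over elements `t` of `I_{2M}^N` (encoded by their
images, the `2M`-element subsets `s` of `{0,…,N−1}`, with `t = s.orderEmbOfFin` and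
`t' = sᶜ.orderEmbOfFin`),
`|Δ(α,β)| = Σ_t sgn(t) {det W^β_{i,t} (−i)^M ∏_m sgn(Im β_m)}{det W^α_{i',t'} ∏_{j<k} sgn(α_k−α_j)}`. -/
theorem abs_vandermonde_laplace_expansion (N L M : ℕ) (h : L + 2*M = N)
    (α : Fin L → ℝ) (β : Fin M → ℂ) (hβ : ∀ m, (β m).im ≠ 0)
    (P : ℕ → Polynomial ℂ)
    (hP : ∀ n < N, (P n).Monic ∧ (P n).natDegree = n) :
    ((‖vand (gammaVec α β)‖ : ℝ) : ℂ)
      = ∑ s ∈ (Finset.powersetCard (2*M) (Finset.univ : Finset (Fin N))).attach,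
          ((Equiv.Perm.sign
              (shuffle s.1 ((Finset.mem_powersetCard.mp s.2).2)) : ℤ) : ℂ) *
          ((Matrix.det (Matrix.of fun j k : Fin (2*M) =>
              (P ((s.1.orderEmbOfFin ((Finset.mem_powersetCard.mp s.2).2) k : Fin N) : ℕ)).eval
                (gammaVec α β ⟨(j:ℕ), by have := j.isLt; omega⟩))) *
            (-Complex.I)^M * ∏ m : Fin M, ((Real.sign ((β m).im) : ℝ) : ℂ)) *
          ((Matrix.det (Matrix.of fun j k : Fin L =>
              (P (((s.1)ᶜ.orderEmbOfFin
                  (by rw [Finset.card_compl, Fintype.card_fin,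
                        (Finset.mem_powersetCard.mp s.2).2]; omega) k : Fin N) : ℕ)).eval
                ((α j : ℝ) : ℂ))) *
            ∏ j : Fin L, ∏ k ∈ Finset.Ioi j, ((Real.sign (α k - α j) : ℝ) : ℂ)) := by
  classical
  have hN : 2*M + L = N := by omega
  have hdetA : (Matrix.of fun j k : Fin N => (P (k:ℕ)).eval
      (gammaVec α β (Fin.cast hN.symm j))).det = vand (gammaVec α β) := by
    rw [← Matrix.det_eval_matrixOfPolynomials_eq_det_vandermonde
      (fun j : Fin N => gammaVec α β (Fin.cast hN.symm j))
      (fun k : Fin N => P (k:ℕ))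
      (fun i => (hP (i:ℕ) i.isLt).2) (fun i => (hP (i:ℕ) i.isLt).1)]
    rw [Matrix.det_vandermonde]
    exact vand_cast hN.symm (gammaVec α β)
  calc ((‖vand (gammaVec α β)‖ : ℝ) : ℂ)
      = vand (gammaVec α β)
          * ((-Complex.I)^M * ∏ m : Fin M, ((Real.sign ((β m).im) : ℝ) : ℂ))
          * ∏ j : Fin L, ∏ k ∈ Finset.Ioi j, ((Real.sign (α k - α j) : ℝ) : ℂ) :=
        abs_vand_eq α β hβ
    _ = (Matrix.of fun j k : Fin N => (P (k:ℕ)).eval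
          (gammaVec α β (Fin.cast hN.symm j))).det
          * ((-Complex.I)^M * ∏ m : Fin M, ((Real.sign ((β m).im) : ℝ) : ℂ))
          * ∏ j : Fin L, ∏ k ∈ Finset.Ioi j, ((Real.sign (α k - α j) : ℝ) : ℂ) := by
        rw [hdetA]
    _ = _ := by
        rw [det_laplace hN, Finset.sum_mul, Finset.sum_mul]
        refine Finset.sum_congr rfl fun s _ => ?_
        have hm1 : (Matrix.of fun j k : Fin (2*M) =>
            (Matrix.of fun j' k' : Fin N => (P (k':ℕ)).eval
              (gammaVec α β (Fin.cast hN.symm j')))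
              ⟨(j:ℕ), by have := j.isLt; omega⟩
              (s.1.orderEmbOfFin ((Finset.mem_powersetCard.mp s.2).2) k))
            = (Matrix.of fun j k : Fin (2*M) =>
            (P ((s.1.orderEmbOfFin ((Finset.mem_powersetCard.mp s.2).2) k : Fin N) : ℕ)).eval
              (gammaVec α β ⟨(j:ℕ), by have := j.isLt; omega⟩)) := by
          ext j k
          rfl
        have hm2 : (Matrix.of fun j k : Fin L =>
            (Matrix.of fun j' k' : Fin N => (P (k':ℕ)).eval
              (gammaVec α β (Fin.cast hN.symm j')))
              ⟨2*M + (j:ℕ), by have := j.isLt; omega⟩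
              ((s.1)ᶜ.orderEmbOfFin (by rw [Finset.card_compl, Fintype.card_fin,
                (Finset.mem_powersetCard.mp s.2).2]; omega) k))
            = (Matrix.of fun j k : Fin L =>
            (P (((s.1)ᶜ.orderEmbOfFin (by rw [Finset.card_compl, Fintype.card_fin,
                  (Finset.mem_powersetCard.mp s.2).2]; omega) k : Fin N) : ℕ)).eval
              ((α j : ℝ) : ℂ)) := by
          ext j k
          show (P _).eval (gammaVec α β ⟨2*M + (j:ℕ), by have := j.isLt; omega⟩) = _
          rw [gammaVec_alpha α β (j:ℕ) j.isLt, Fin.eta]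
          rfl
        rw [hm1, hm2]
        ring


end
end

section
/- Let L+2M = N, let α ∈ ℝ^L and β ∈ (ℂ∖ℝ)^M. Then |Δ(α,β)| = (−i)^M · { ∏_{j<k} sgn(α_k − α_j) · ∏_{m=1}^M sgn(Im β_m) } · Δ(α,β). Equivalently, Δ(α,β) = { ∏_{j<k} (α_k − α_j) } · ∏_{ℓ=1}^L ∏_{m=1}^M |β_m − α_ℓ|² · { ∏_{m<n} |β_n − β_m|² |β_n − β̄_m|² } · ∏_{m=1}^M 2i·Im(β_m). -/
open Finset

noncomputable section

lemma vand_cast_s9 {K K' : ℕ} (h : K' = K) (γ : Fin K → ℂ) :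
    vand (γ ∘ Fin.cast h) = vand γ := by subst h; rfl

lemma conj_mul_self' (w : ℂ) : (starRingEnd ℂ) w * w = ((‖w‖ : ℝ) : ℂ)^2 := by
  rw [mul_comm, Complex.mul_conj, ← Complex.sq_norm, Complex.ofReal_pow]

lemma pair_split {K : ℕ} (c : Fin (K+1) → Fin (K+1) → ℂ) :
    ∏ m : Fin (K+1), ∏ n ∈ Ioi m, c m n
      = (∏ n : Fin K, c 0 n.succ) * ∏ m : Fin K, ∏ n ∈ Ioi m, c m.succ n.succ := by
  rw [Fin.prod_univ_succ, Fin.prod_Ioi_zero]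
  congr 1
  exact Finset.prod_congr rfl fun m _ => Fin.prod_Ioi_succ (c m.succ) m

lemma vand_succ {K : ℕ} (γ : Fin (K+1) → ℂ) :
    vand γ = (∏ n : Fin K, (γ n.succ - γ 0)) * vand (γ ∘ Fin.succ) :=
  pair_split (fun m n => γ n - γ m)

lemma prod_range_two_mul {G : Type*} [CommMonoid G] (M : ℕ) (f : ℕ → G) :
    ∏ i ∈ Finset.range (2*M), f i = ∏ k ∈ Finset.range M, (f (2*k) * f (2*k+1)) := by
  induction M with
  | zero => simp
  | succ m ih =>
    have h : 2*(m+1) = 2*m + 1 + 1 := by ring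
    rw [h, Finset.prod_range_succ, Finset.prod_range_succ, ih, Finset.prod_range_succ, mul_assoc]

def Gaux {L M : ℕ} (α : Fin L → ℝ) (β : Fin M → ℂ) : ℕ → ℂ := fun i =>
  if h : i < 2*M then
    (if i % 2 = 0 then (starRingEnd ℂ) (β ⟨i/2, by omega⟩) else β ⟨i/2, by omega⟩)
  else if h' : i - 2*M < L then ((α ⟨i - 2*M, h'⟩ : ℝ) : ℂ) else 0

lemma gammaVec_eq_Gaux {L M : ℕ} (α : Fin L → ℝ) (β : Fin M → ℂ) (j : Fin (2*M+L)) :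
    gammaVec α β j = Gaux α β (j : ℕ) := by
  rcases j with ⟨i, hi⟩
  by_cases h : i < 2*M
  · simp only [gammaVec, Gaux, dif_pos h]
  · simp only [gammaVec, Gaux, dif_neg h]
    rw [dif_pos (by omega)]

lemma Gaux_even {L M : ℕ} (α : Fin L → ℝ) (β : Fin M → ℂ) (k : ℕ) (hk : k < M) :
    Gaux α β (2*k) = (starRingEnd ℂ) (β ⟨k, hk⟩) := by
  simp only [Gaux]
  rw [dif_pos (by omega), if_pos (by omega)]
  exact congrArg _ (congrArg β (Fin.ext (by simp only [Fin.val_mk]; omega)))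

lemma Gaux_odd {L M : ℕ} (α : Fin L → ℝ) (β : Fin M → ℂ) (k : ℕ) (hk : k < M) :
    Gaux α β (2*k+1) = β ⟨k, hk⟩ := by
  simp only [Gaux]
  rw [dif_pos (by omega), if_neg (by omega)]
  exact congrArg β (Fin.ext (by simp only [Fin.val_mk]; omega))

lemma Gaux_real {L M : ℕ} (α : Fin L → ℝ) (β : Fin M → ℂ) (i : ℕ) (hi : i < L) :
    Gaux α β (2*M+i) = ((α ⟨i, hi⟩ : ℝ) : ℂ) := by
  simp only [Gaux]
  rw [dif_neg (by omega), dif_pos (by omega)]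
  exact congrArg _ (congrArg α (Fin.ext (by simp only [Fin.val_mk]; omega)))

lemma Gaux_shift {L M : ℕ} (α : Fin L → ℝ) (β : Fin (M+1) → ℂ) (i : ℕ) :
    Gaux α β (i+2) = Gaux α (fun k : Fin M => β k.succ) i := by
  by_cases h : i < 2*M
  · simp only [Gaux]
    rw [dif_pos (by omega), dif_pos h]
    have hmod : (i+2) % 2 = i % 2 := by omega
    rw [hmod]
    by_cases hp : i % 2 = 0
    · rw [if_pos hp, if_pos hp]
      exact congrArg _ (congrArg β (Fin.ext (by simp only [Fin.val_succ, Fin.val_mk]; omega)))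
    · rw [if_neg hp, if_neg hp]
      exact congrArg β (Fin.ext (by simp only [Fin.val_succ, Fin.val_mk]; omega))
  · simp only [Gaux]
    rw [dif_neg (by omega), dif_neg h]
    by_cases h' : i - 2*M < L
    · rw [dif_pos (by omega), dif_pos h']
      exact congrArg _ (congrArg α (Fin.ext (by simp only [Fin.val_mk]; omega)))
    · rw [dif_neg (by omega), dif_neg h']

lemma prod_gammaVec {L M : ℕ} (α : Fin L → ℝ) (β : Fin M → ℂ) (f : ℂ → ℂ) :
    ∏ n : Fin (2*M+L), f (gammaVec α β n)
      = (∏ k : Fin M, f ((starRingEnd ℂ) (β k)) * f (β k)) * ∏ ℓ : Fin L, f ((α ℓ : ℂ)) := by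
  have h1 : ∏ n : Fin (2*M+L), f (gammaVec α β n)
      = ∏ i ∈ Finset.range (2*M+L), f (Gaux α β i) := by
    rw [← Fin.prod_univ_eq_prod_range (fun i => f (Gaux α β i)) (2*M+L)]
    exact Finset.prod_congr rfl fun j _ => by rw [gammaVec_eq_Gaux]
  rw [h1, Finset.prod_range_add, prod_range_two_mul]
  congr 1
  · rw [← Fin.prod_univ_eq_prod_range (fun k => f (Gaux α β (2*k)) * f (Gaux α β (2*k+1))) M]
    refine Finset.prod_congr rfl fun k _ => ?_
    rw [Gaux_even α β k k.isLt, Gaux_odd α β k k.isLt]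
  · rw [← Fin.prod_univ_eq_prod_range (fun i => f (Gaux α β (2*M+i))) L]
    refine Finset.prod_congr rfl fun ℓ _ => ?_
    rw [Gaux_real α β ℓ ℓ.isLt]

lemma pair_term (b c : ℂ) :
    (((starRingEnd ℂ) c - (starRingEnd ℂ) b) * ((starRingEnd ℂ) c - b)) *
      ((c - (starRingEnd ℂ) b) * (c - b))
      = ((‖c - b‖ : ℝ) : ℂ)^2 * ((‖c - (starRingEnd ℂ) b‖ : ℝ) : ℂ)^2 := by
  have h1 : (starRingEnd ℂ) c - (starRingEnd ℂ) b = (starRingEnd ℂ) (c - b) := (map_sub _ _ _).symm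
  have h2 : (starRingEnd ℂ) c - b = (starRingEnd ℂ) (c - (starRingEnd ℂ) b) := by
    rw [map_sub, Complex.conj_conj]
  rw [h1, h2, ← conj_mul_self' (c - b), ← conj_mul_self' (c - (starRingEnd ℂ) b)]
  ring

lemma real_term (b : ℂ) (a : ℝ) :
    ((a:ℂ) - (starRingEnd ℂ) b) * ((a:ℂ) - b) = ((‖b - (a:ℂ)‖ : ℝ) : ℂ)^2 := by
  have h1 : (a:ℂ) - (starRingEnd ℂ) b = (starRingEnd ℂ) ((a:ℂ) - b) := by
    rw [map_sub, Complex.conj_ofReal]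
  rw [h1, conj_mul_self', norm_sub_rev]

lemma diag_term (b : ℂ) : b - (starRingEnd ℂ) b = 2 * Complex.I * ((b.im : ℝ) : ℂ) := by
  rw [Complex.sub_conj]; push_cast; ring

lemma vand_factor (L M : ℕ) (α : Fin L → ℝ) (β : Fin M → ℂ) :
    vand (gammaVec α β)
      = (∏ j : Fin L, ∏ k ∈ Finset.Ioi j, (((α k - α j : ℝ) : ℝ) : ℂ)) *
        (∏ ℓ : Fin L, ∏ m : Fin M, ((‖β m - ((α ℓ : ℝ) : ℂ)‖ : ℝ) : ℂ)^2) *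
        (∏ m : Fin M, ∏ n ∈ Finset.Ioi m, ((‖β n - β m‖ : ℝ) : ℂ)^2 *
            ((‖β n - (starRingEnd ℂ) (β m)‖ : ℝ) : ℂ)^2) *
        ∏ m : Fin M, (2 * Complex.I * (((β m).im : ℝ) : ℂ)) := by
  induction M with
  | zero =>
      have h0 : 2*0 + L = L := by omega
      have he : gammaVec α β = (fun ℓ : Fin L => ((α ℓ : ℝ) : ℂ)) ∘ Fin.cast h0 := by
        funext j
        simp only [Function.comp_apply, gammaVec]
        rw [dif_neg (by omega)]
        exact congrArg _ (congrArg α (Fin.ext (by simp only [Fin.val_mk, Fin.coe_cast]; omega)))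
      rw [he, vand_cast_s9 h0]
      simp [vand, Complex.ofReal_sub]
  | succ M ih =>
      have hcast : 2*M + L + 1 + 1 = 2*(M+1) + L := by omega
      set γ' : Fin (2*M+L+1+1) → ℂ := gammaVec α β ∘ Fin.cast hcast with hγ'
      have hγval : ∀ j : Fin (2*M+L+1+1), γ' j = Gaux α β (j : ℕ) := by
        intro j
        rw [hγ', Function.comp_apply, gammaVec_eq_Gaux, Fin.coe_cast]
      have hv0 : γ' 0 = (starRingEnd ℂ) (β 0) := by
        rw [hγval, Fin.val_zero]
        have h := Gaux_even α β 0 (Nat.succ_pos M)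
        norm_num at h
        rw [h]
      have hv1 : γ' 1 = β 0 := by
        rw [hγval]
        have hval : ((1 : Fin (2*M+L+1+1)) : ℕ) = 1 := by
          rw [Fin.val_one']; exact Nat.one_mod (2*M+L)
        rw [hval]
        have h := Gaux_odd α β 0 (Nat.succ_pos M)
        norm_num at h
        rw [h]
      have hvs : ∀ n : Fin (2*M+L), γ' n.succ.succ = gammaVec α (fun k => β k.succ) n := by
        intro n
        rw [hγval, gammaVec_eq_Gaux]
        have hnv : ((n.succ.succ : Fin (2*M+L+1+1)) : ℕ) = (n : ℕ) + 2 := by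
          simp only [Fin.val_succ]
        rw [hnv, Gaux_shift]
      have htail : (γ' ∘ Fin.succ) ∘ Fin.succ = gammaVec α (fun k => β k.succ) :=
        funext fun n => hvs n
      have hvv : vand (gammaVec α β) = vand γ' := by
        rw [hγ']; exact (vand_cast_s9 hcast _).symm
      have hL : vand (gammaVec α β)
          = (β 0 - (starRingEnd ℂ) (β 0)) *
            ((∏ n : Fin (2*M+L), (γ' n.succ.succ - (starRingEnd ℂ) (β 0))) *
             (∏ n : Fin (2*M+L), (γ' n.succ.succ - β 0)) *
             vand (gammaVec α (fun k => β k.succ))) := by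
        rw [hvv, vand_succ γ', Fin.prod_univ_succ, vand_succ (γ' ∘ Fin.succ), htail]
        simp only [Function.comp_apply, Fin.succ_zero_eq_one, hv0, hv1]
        ring
      have hmid : (∏ n : Fin (2*M+L), (γ' n.succ.succ - (starRingEnd ℂ) (β 0))) *
             (∏ n : Fin (2*M+L), (γ' n.succ.succ - β 0))
          = (∏ k : Fin M, (((‖β k.succ - β 0‖ : ℝ) : ℂ)^2 *
                ((‖β k.succ - (starRingEnd ℂ) (β 0)‖ : ℝ) : ℂ)^2)) *
            ∏ ℓ : Fin L, ((‖β 0 - ((α ℓ : ℝ) : ℂ)‖ : ℝ) : ℂ)^2 := by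
        rw [← Finset.prod_mul_distrib]
        have hterm : ∀ n : Fin (2*M+L),
            (γ' n.succ.succ - (starRingEnd ℂ) (β 0)) * (γ' n.succ.succ - β 0)
            = (fun z => (z - (starRingEnd ℂ) (β 0)) * (z - β 0)) (gammaVec α (fun k => β k.succ) n) :=
          fun n => by rw [hvs n]
        rw [Finset.prod_congr rfl fun n _ => hterm n,
            prod_gammaVec α (fun k => β k.succ) (fun z => (z - (starRingEnd ℂ) (β 0)) * (z - β 0))]
        congr 1
        · exact Finset.prod_congr rfl fun k _ => pair_term (β 0) (β k.succ)
        · exact Finset.prod_congr rfl fun ℓ _ => real_term (β 0) (α ℓ)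
      have hB : (∏ ℓ : Fin L, ∏ m : Fin (M+1), ((‖β m - ((α ℓ : ℝ):ℂ)‖ : ℝ) : ℂ)^2)
          = (∏ ℓ : Fin L, ((‖β 0 - ((α ℓ:ℝ):ℂ)‖ : ℝ) : ℂ)^2) *
            ∏ ℓ : Fin L, ∏ m : Fin M, ((‖β m.succ - ((α ℓ:ℝ):ℂ)‖ : ℝ) : ℂ)^2 := by
        rw [← Finset.prod_mul_distrib]
        exact Finset.prod_congr rfl fun ℓ _ => Fin.prod_univ_succ _
      rw [hL, hmid, ih (fun k => β k.succ), diag_term, hB,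
          pair_split (fun m n : Fin (M+1) => ((‖β n - β m‖ : ℝ) : ℂ)^2 *
            ((‖β n - (starRingEnd ℂ) (β m)‖ : ℝ) : ℂ)^2),
          Fin.prod_univ_succ (fun m : Fin (M+1) => 2 * Complex.I * (((β m).im : ℝ) : ℂ))]
      ring

/-- `|Δ(α,β)| = (−i)^M {∏_{j<k} sgn(α_k−α_j) ∏_m sgn(Im β_m)} Δ(α,β)`; equivalently,
`Δ(α,β) = {∏_{j<k}(α_k−α_j)} ∏_{ℓ,m} |β_m−α_ℓ|² {∏_{m<n} |β_n−β_m|²|β_n−β̄_m|²}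
∏_m 2i·Im(β_m)`. -/
theorem abs_vandermonde_eq (N L M : ℕ) (h : L + 2*M = N)
    (α : Fin L → ℝ) (β : Fin M → ℂ) (hβ : ∀ m, (β m).im ≠ 0) :
    (((‖vand (gammaVec α β)‖ : ℝ) : ℂ)
        = (-Complex.I)^M *
          ((∏ j : Fin L, ∏ k ∈ Finset.Ioi j, ((Real.sign (α k - α j) : ℝ) : ℂ)) *
            ∏ m : Fin M, ((Real.sign ((β m).im) : ℝ) : ℂ)) *
          vand (gammaVec α β)) ∧
    (vand (gammaVec α β)
        = (∏ j : Fin L, ∏ k ∈ Finset.Ioi j, (((α k - α j : ℝ) : ℝ) : ℂ)) *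
          (∏ ℓ : Fin L, ∏ m : Fin M,
            ((‖β m - ((α ℓ : ℝ) : ℂ)‖ : ℝ) : ℂ)^2) *
          (∏ m : Fin M, ∏ n ∈ Finset.Ioi m,
            ((‖β n - β m‖ : ℝ) : ℂ)^2 *
              ((‖β n - (starRingEnd ℂ) (β m)‖ : ℝ) : ℂ)^2) *
          ∏ m : Fin M, (2 * Complex.I * (((β m).im : ℝ) : ℂ))) := by
  refine ⟨?_, vand_factor L M α β⟩
  set a : ℝ := ∏ j : Fin L, ∏ k ∈ Ioi j, (α k - α j) with ha
  set b : ℝ := ∏ ℓ : Fin L, ∏ m : Fin M, (‖β m - ((α ℓ : ℝ):ℂ)‖)^2 with hb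
  set c : ℝ := ∏ m : Fin M, ∏ n ∈ Ioi m,
      (‖β n - β m‖)^2 * (‖β n - (starRingEnd ℂ) (β m)‖)^2 with hc
  set d : ℝ := ∏ m : Fin M, (β m).im with hd
  set sa : ℝ := ∏ j : Fin L, ∏ k ∈ Ioi j, Real.sign (α k - α j) with hsa
  set sd : ℝ := ∏ m : Fin M, Real.sign ((β m).im) with hsd
  have hA : (∏ j : Fin L, ∏ k ∈ Ioi j, (((α k - α j : ℝ):ℝ):ℂ)) = (a:ℂ) := by
    rw [ha]; push_cast; ring
  have hB : (∏ ℓ : Fin L, ∏ m : Fin M, ((‖β m - ((α ℓ : ℝ):ℂ)‖ : ℝ):ℂ)^2) = (b:ℂ) := by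
    rw [hb]; push_cast; ring
  have hC : (∏ m : Fin M, ∏ n ∈ Ioi m, ((‖β n - β m‖ : ℝ):ℂ)^2 *
      ((‖β n - (starRingEnd ℂ) (β m)‖ : ℝ):ℂ)^2) = (c:ℂ) := by
    rw [hc]; push_cast; ring
  have hD : (∏ m : Fin M, (2 * Complex.I * (((β m).im : ℝ):ℂ)))
      = (2*Complex.I)^M * (d:ℂ) := by
    rw [Finset.prod_mul_distrib, Finset.prod_const, Finset.card_univ, Fintype.card_fin, hd]
    push_cast; ring
  have key := vand_factor L M α β
  rw [hA, hB, hC, hD] at key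
  have hbnn : (0:ℝ) ≤ b := by rw [hb]; positivity
  have hcnn : (0:ℝ) ≤ c := by rw [hc]; positivity
  have habs : ‖vand (gammaVec α β)‖ = |a| * b * c * (2^M * |d|) := by
    rw [key]
    simp only [norm_mul, norm_pow, Complex.norm_real, Real.norm_eq_abs, Complex.norm_I, Complex.norm_two]
    rw [abs_of_nonneg hbnn, abs_of_nonneg hcnn]
    ring
  have hsign : ∀ x : ℝ, Real.sign x * x = |x| := by
    intro x
    rcases lt_trichotomy x 0 with hx|hx|hx
    · rw [Real.sign_of_neg hx, abs_of_neg hx]; ring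
    · simp [hx]
    · rw [Real.sign_of_pos hx, abs_of_pos hx]; ring
  have hsaa : sa * a = |a| := by
    rw [hsa, ha, ← Finset.prod_mul_distrib, Finset.abs_prod]
    refine Finset.prod_congr rfl fun j _ => ?_
    rw [← Finset.prod_mul_distrib, Finset.abs_prod]
    exact Finset.prod_congr rfl fun k _ => hsign _
  have hsdd : sd * d = |d| := by
    rw [hsd, hd, ← Finset.prod_mul_distrib, Finset.abs_prod]
    exact Finset.prod_congr rfl fun m _ => hsign _
  have hSA : (∏ j : Fin L, ∏ k ∈ Ioi j, ((Real.sign (α k - α j) : ℝ):ℂ)) = (sa:ℂ) := by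
    rw [hsa]; push_cast; ring
  have hSD : (∏ m : Fin M, ((Real.sign ((β m).im) : ℝ):ℂ)) = (sd:ℂ) := by
    rw [hsd]; push_cast; ring
  have hIM : (-Complex.I)^M * (2*Complex.I)^M = 2^M := by
    rw [← mul_pow]
    congr 1
    rw [show (-Complex.I) * (2*Complex.I) = -2 * (Complex.I*Complex.I) from by ring,
        Complex.I_mul_I]
    ring
  rw [habs, key, hSA, hSD, ← hsaa, ← hsdd]
  push_cast
  rw [← hIM]
  ring

end
end
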